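/- Let q, N ≥ 1 and i ≠ j. Let M_{ij} = I + E with E having (j,i) block I_N. Let A be the symmetric qN × qN matrix which is zero except A_{(i,p),(j,n)} = A_{(j,n),(i,p)} = 1 (a chord between component i strip p and component j strip n). Then M_{ij}^T A M_{ij} has ones exactly at positions ((i,p),(i,n)), ((i,p),(j,n)) and their transposes. -/

import Mathlib

open Matrix

/-- Band sum of component i over component j acting on a page representing a
chord between component i (strip p) and component j (strip n): the foot on j
doubles onto i and j. -/
theorem stmt_12 (q N : ℕ) (i j : Fin q) (hij : i ≠ j) (n p : Fin N) (hnp : n ≠ p)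
    (E M A : Matrix (Fin q × Fin N) (Fin q × Fin N) ℝ)
    (hE : ∀ (s t : Fin q) (u v : Fin N),
      E (s, u) (t, v) = if s = j ∧ t = i ∧ u = v then 1 else 0)
    (hM : M = 1 + E)
    (hA : ∀ x y, A x y =
      if (x = (i, p) ∧ y = (j, n)) ∨ (x = (j, n) ∧ y = (i, p)) then 1 else 0) :
    Mᵀ * A * M = Matrix.of (fun x y : Fin q × Fin N =>
      if (x = (i, p) ∧ y = (i, n)) ∨ (x = (i, p) ∧ y = (j, n)) ∨
         (y = (i, p) ∧ x = (i, n)) ∨ (y = (i, p) ∧ x = (j, n))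
      then (1 : ℝ) else 0) := by
  have hAeq : A = Matrix.single (i,p) (j,n) 1 + Matrix.single (j,n) (i,p) 1 := by
    ext x y
    rw [hA]
    simp only [Matrix.add_apply, Matrix.single, of_apply]
    by_cases h1 : x = (i,p) ∧ y = (j,n)
    · obtain ⟨rfl, rfl⟩ := h1
      simp [Prod.ext_iff, hij, hnp, Ne.symm hij, Ne.symm hnp]
    · by_cases h2 : x = (j,n) ∧ y = (i,p)
      · obtain ⟨rfl, rfl⟩ := h2
        simp [Prod.ext_iff, hij, hnp, Ne.symm hij, Ne.symm hnp]
      · rw [if_neg (by tauto), if_neg (fun h => h1 ⟨h.1.symm, h.2.symm⟩),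
          if_neg (fun h => h2 ⟨h.1.symm, h.2.symm⟩), add_zero]
  have hMrow : ∀ x, M (i,p) x = if x = (i,p) then 1 else 0 := by
    rintro ⟨c,d⟩
    simp [hM, one_apply, hE, hij, Prod.ext_iff, eq_comm]
  have hMrow2 : ∀ x, M (j,n) x = (if x = (j,n) then 1 else 0) + (if x = (i,n) then 1 else 0) := by
    rintro ⟨c,d⟩
    simp only [hM, Matrix.add_apply, one_apply, hE, Prod.mk.injEq]
    by_cases h1 : c = i <;> by_cases h2 : c = j <;> by_cases h3 : d = n <;>
      simp_all [Ne.symm hij, eq_comm]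
  have key : ∀ (a b : Fin q × Fin N) (c : ℝ) (x y : Fin q × Fin N),
      (Mᵀ * Matrix.single a b c * M) x y = c * (M a x * M b y) := by
    intro a b c x y
    rw [mul_apply]
    have hw : ∀ w, (Mᵀ * Matrix.single a b c) x w = if w = b then M a x * c else 0 := by
      intro w
      by_cases h : w = b
      · subst h; simp
      · simp [h]
    simp only [hw, ite_mul, zero_mul, Finset.sum_ite_eq', Finset.mem_univ, if_true]
    ring
  have d12 : ((i,p) : Fin q × Fin N) ≠ (j,n) := by simp [Prod.ext_iff, hij]
  have d13 : ((i,p) : Fin q × Fin N) ≠ (i,n) := by simp [Prod.ext_iff, Ne.symm hnp]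
  have d23 : ((j,n) : Fin q × Fin N) ≠ (i,n) := by simp [Prod.ext_iff, Ne.symm hij]
  ext x y
  rw [hAeq, mul_add, add_mul]
  simp only [Matrix.add_apply, key, hMrow, hMrow2, of_apply, one_mul]
  clear hE hM hA hAeq hMrow hMrow2 key hij hnp
  rcases eq_or_ne x (i,p) with rfl | hx1 <;> rcases eq_or_ne y (i,p) with rfl | hy1 <;>
    simp_all <;> split_ifs <;> simp_all
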